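/- Soundness of PETS(Ax) via approximation semantics: let 𝒟 ⊢ t = u be a PETS(Ax) derivation in Variable Normal Form, ρ an assignment, F a model of Ax (i.e., for all axioms s=s′ in Ax and all assignments ρ′, ⟦s⟧_{F,ρ′} ⊑ ⟦s′⟧_{F,ρ′}), and κ = max(G(F),G(ρ)) + lh(𝒟). Then there exist sequences σ₁ and σ₂ of updates based on F, κ and 𝒟 such that ⟦t⟧_{F,ρ} ⊑ ⟦u⟧_{F*σ₁,ρ} and ⟦u⟧_{F,ρ} ⊑ ⟦t⟧_{F*σ₂,ρ}. -/

import Mathlib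

namespace PETS

/-! ## Approximate values -/

/-- The set `𝔻` of approximate values: binary strings plus `*` (unknown). -/
inductive D where
  | eps  : D
  | b0   : D → D
  | b1   : D → D
  | star : D
deriving DecidableEq

instance : Zero D := ⟨D.star⟩

/-- The approximation relation `⊑` on `𝔻`. -/
inductive Approx : D → D → Prop where
  | star (v : D) : Approx .star v
  | eps : Approx .eps .eps
  | b0 {v w : D} : Approx v w → Approx (.b0 v) (.b0 w)
  | b1 {v w : D} : Approx v w → Approx (.b1 v) (.b1 w)

/-- Componentwise extension of `⊑` to tuples. -/
def TApprox {n : ℕ} (u v : Fin n → D) : Prop := ∀ i, Approx (u i) (v i)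

/-- Compatibility `u △ v`. -/
def Compat (u v : D) : Prop := Approx u v ∨ Approx v u

/-- Componentwise compatibility of tuples. -/
def TCompat {n : ℕ} (u v : Fin n → D) : Prop := ∀ i, Compat (u i) (v i)

/-- The gauge `G(v)` of an approximate value. -/
def D.gauge : D → ℕ
  | .eps => 1
  | .star => 1
  | .b0 v => v.gauge + 1
  | .b1 v => v.gauge + 1

/-- The gauge of a tuple of approximate values. -/
def tupGauge {n : ℕ} (v : Fin n → D) : ℕ := Finset.univ.sup fun i => (v i).gauge

open Classical in
/-- `maxapprx S`: the `⊑`-greatest element of `S` if it exists, else `*`.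
In particular `maxapprx ∅ = *`. -/
noncomputable def maxapprx (S : Set D) : D :=
  if h : ∃ m, m ∈ S ∧ ∀ v ∈ S, Approx v m then h.choose else D.star

/-! ## Generators and consistent sets -/

/-- A finite set of (potential) generators for `𝔻^n → 𝔻`. -/
abbrev Gens (n : ℕ) := Finset ((Fin n → D) × D)

/-- `f` is a consistent set of generators for `𝔻^n → 𝔻`:
all values are `≠ *` and compatible arguments have compatible values. -/
def ConsistentGens {n : ℕ} (f : Gens n) : Prop :=
  (∀ p ∈ f, p.2 ≠ D.star) ∧
  ∀ p ∈ f, ∀ q ∈ f, TCompat p.1 q.1 → Compat p.2 q.2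

/-- `f[x] = { v | ∃ w ⊑ x, (w ↦ v) ∈ f }`. -/
def gensAt {n : ℕ} (f : Gens n) (x : Fin n → D) : Set D :=
  {v | ∃ w : Fin n → D, TApprox w x ∧ (w, v) ∈ f}

/-- The finitely generated map `f(x) = maxapprx f[x]`. -/
noncomputable def applyGens {n : ℕ} (f : Gens n) (x : Fin n → D) : D :=
  maxapprx (gensAt f x)

/-! ## Terms -/

/-- Terms over the language: variables, the basic symbols `ε`, `s₀`, `s₁`, and
countably many non-basic function symbols `op k` of each arity `a`
(a non-basic symbol is identified by the pair `(k, a)`). -/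
inductive Tm where
  | var : ℕ → Tm
  | eps : Tm
  | s0 : Tm → Tm
  | s1 : Tm → Tm
  | app : (k : ℕ) → (a : ℕ) → (Fin a → Tm) → Tm

/-- The length (number of symbols) of a term. -/
def Tm.lh : Tm → ℕ
  | .var _ => 1
  | .eps => 1
  | .s0 t => t.lh + 1
  | .s1 t => t.lh + 1
  | .app _ a args => (Finset.univ.sum fun i : Fin a => (args i).lh) + 1

/-- The set of variables occurring in a term. -/
def Tm.vars : Tm → Finset ℕ
  | .var x => {x}
  | .eps => ∅
  | .s0 t => t.vars
  | .s1 t => t.vars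
  | .app _ a args => Finset.univ.biUnion fun i : Fin a => (args i).vars

/-- Substitution `t[u/x]` of the term `u` for the variable `x` in `t`. -/
def Tm.subst (t : Tm) (x : ℕ) (u : Tm) : Tm :=
  match t with
  | .var y => if y = x then u else .var y
  | .eps => .eps
  | .s0 s => .s0 (s.subst x u)
  | .s1 s => .s1 (s.subst x u)
  | .app k a args => .app k a fun i => (args i).subst x u

/-- Simultaneous substitution of terms for all variables. -/
def Tm.msubst (σ : ℕ → Tm) : Tm → Tm
  | .var x => σ x
  | .eps => .eps
  | .s0 t => .s0 (t.msubst σ)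
  | .s1 t => .s1 (t.msubst σ)
  | .app k a args => .app k a fun i => (args i).msubst σ

/-! ## Frames and assignments -/

/-- An entry of a frame: a non-basic symbol `(k, a)` together with a
generator `(arg, out)` for `𝔻^a → 𝔻`. -/
abbrev Entry := Σ _k : ℕ, Σ a : ℕ, (Fin a → D) × D

/-- A frame: a finite set of entries, i.e. a finite partial map from
non-basic function symbols to finite sets of generators. -/
abbrev Frame := Finset Entry

/-- `F(f)[x]` for the symbol `f = (k, a)`:
the set `{ v | ∃ w ⊑ x, (w ↦ v) ∈ F(f) }`. -/
def Frame.setAt (F : Frame) (k a : ℕ) (x : Fin a → D) : Set D :=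
  {v | ∃ w : Fin a → D, TApprox w x ∧ (⟨k, a, (w, v)⟩ : Entry) ∈ F}

/-- The evaluation `F(f)(x)` of the finitely generated map of the non-basic
symbol `f = (k, a)` in the frame `F`. -/
noncomputable def Frame.app (F : Frame) (k a : ℕ) (x : Fin a → D) : D :=
  maxapprx (F.setAt k a x)

/-- The gauge of a frame entry. -/
def Entry.gauge (e : Entry) : ℕ := max (tupGauge e.2.2.1) e.2.2.2.gauge

/-- The gauge `G(F)` of a frame. -/
def Frame.gauge (F : Frame) : ℕ := F.sup Entry.gauge

/-- A frame is consistent if each of its sections is a consistent set of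
generators (values `≠ *`, compatible arguments have compatible values). -/
def Frame.Consistent (F : Frame) : Prop :=
  (∀ (k a : ℕ) (w : Fin a → D) (v : D), (⟨k, a, (w, v)⟩ : Entry) ∈ F → v ≠ D.star) ∧
  (∀ (k a : ℕ) (w w' : Fin a → D) (v v' : D),
    (⟨k, a, (w, v)⟩ : Entry) ∈ F → (⟨k, a, (w', v')⟩ : Entry) ∈ F →
    TCompat w w' → Compat v v')

/-- An assignment: a finitely supported map from variables to `𝔻`
(where the zero of `𝔻` is `*`, i.e. `ρ(x) = *` outside the domain). -/
abbrev Assignment := ℕ →₀ D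

/-- The gauge `G(ρ)` of an assignment. -/
noncomputable def Assignment.gauge (ρ : Assignment) : ℕ :=
  ρ.support.sup fun x => (ρ x).gauge

/-- The evaluation `⟦t⟧_{F,ρ}` of a term under a frame and an assignment:
basic symbols are evaluated as themselves, non-basic symbols via their
finitely generated maps. -/
noncomputable def eval (F : Frame) (ρ : Assignment) : Tm → D
  | .var x => ρ x
  | .eps => D.eps
  | .s0 t => D.b0 (eval F ρ t)
  | .s1 t => D.b1 (eval F ρ t)
  | .app k a args => F.app k a fun i => eval F ρ (args i)

/-! ## Nice axiom systems -/

/-- A generalized variable: a variable, `ε`, `s₀(x)` or `s₁(x)`. -/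
inductive GVar where
  | var : ℕ → GVar
  | eps : GVar
  | s0 : ℕ → GVar
  | s1 : ℕ → GVar
deriving DecidableEq

/-- The term denoted by a generalized variable. -/
def GVar.toTm : GVar → Tm
  | .var x => .var x
  | .eps => .eps
  | .s0 x => .s0 (.var x)
  | .s1 x => .s1 (.var x)

/-- The variables of a generalized variable. -/
def GVar.vars : GVar → Finset ℕ
  | .var x => {x}
  | .eps => ∅
  | .s0 x => {x}
  | .s1 x => {x}

/-- Applying an assignment to a generalized variable,
e.g. `ρ(sᵢ(x)) = sᵢ(ρ(x))`. -/
def GVar.evalA (ρ : Assignment) : GVar → D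
  | .var x => ρ x
  | .eps => D.eps
  | .s0 x => D.b0 (ρ x)
  | .s1 x => D.b1 (ρ x)

/-- Unifiability of two generalized variables (they have a common
substitution instance). -/
def GVar.unif : GVar → GVar → Prop
  | .var _, _ => True
  | _, .var _ => True
  | .eps, .eps => True
  | .s0 _, .s0 _ => True
  | .s1 _, .s1 _ => True
  | _, _ => False

/-- An axiom: an equation `f(t₁,…,tₐ) = rhs` where `f` is the non-basic
symbol `(k, a)` and each `tᵢ` is a generalized variable. -/
structure Axm where
  k : ℕ
  a : ℕ
  args : Fin a → GVar
  rhs : Tm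

/-- The left-hand side term `f(t₁,…,tₐ)` of an axiom. -/
def Axm.lhs (A : Axm) : Tm := .app A.k A.a fun i => (A.args i).toTm

/-- The variables of the left-hand side of an axiom. -/
def Axm.lhsVars (A : Axm) : Finset ℕ := Finset.univ.biUnion fun i => (A.args i).vars

/-- All variables of an axiom. -/
def Axm.vars (A : Axm) : Finset ℕ := A.lhsVars ∪ A.rhs.vars

/-- A nice set of axioms: each axiom has the form `f(x⃗) = t`, `f(ε,x⃗) = t`,
`f(x0,x⃗) = t` or `f(x1,x⃗) = t` (so all arguments beyond the first are plain
variables), the variables on the left are pairwise distinct, the right-hand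
side variables occur on the left, and no left-hand side occurs twice among
the axioms, also modulo substitution. -/
structure NiceAxioms (Ax : Set Axm) : Prop where
  shape : ∀ A ∈ Ax, ∀ i : Fin A.a, 0 < (i : ℕ) → ∃ x, A.args i = GVar.var x
  distinct : ∀ A ∈ Ax, ∀ i j : Fin A.a, i ≠ j → Disjoint ((A.args i).vars) ((A.args j).vars)
  rhsVars : ∀ A ∈ Ax, A.rhs.vars ⊆ A.lhsVars
  unique : ∀ A ∈ Ax, ∀ B ∈ Ax, A.k = B.k → ∀ h : A.a = B.a,
    (∀ i : Fin A.a, GVar.unif (A.args i) (B.args (Fin.cast h i))) → A = B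

/-! ## Derivations in PETS(Ax) -/

/-- Derivations of the pure equational theory with substitution `PETS(Ax)`:
`Deriv Ax t u` is the type of derivations ending in the equation `t = u`. -/
inductive Deriv (Ax : Set Axm) : Tm → Tm → Type where
  | ax (A : Axm) (hA : A ∈ Ax) (σ : ℕ → Tm) :
      Deriv Ax (A.lhs.msubst σ) (A.rhs.msubst σ)
  | refl (t : Tm) : Deriv Ax t t
  | symm {t u : Tm} (d : Deriv Ax u t) : Deriv Ax t u
  | trans {t s u : Tm} (d₁ : Deriv Ax t s) (d₂ : Deriv Ax s u) : Deriv Ax t u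
  | compat {t u : Tm} (s : Tm) (x : ℕ) (d : Deriv Ax t u) :
      Deriv Ax (s.subst x t) (s.subst x u)
  | subst {t u : Tm} (s : Tm) (x : ℕ) (d : Deriv Ax t u) :
      Deriv Ax (t.subst x s) (u.subst x s)

namespace Deriv

variable {Ax : Set Axm}

/-- The length `lh(𝒟)` of a derivation: the sum of the lengths of the
equations occurring in it plus the length of the additional syntax
identifying rule applications. -/
def lh : {a b : Tm} → Deriv Ax a b → ℕ
  | _, _, .ax A _ σ => (A.lhs.msubst σ).lh + (A.rhs.msubst σ).lh + 1
  | _, _, .refl t => t.lh + t.lh + 1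
  | a, b, .symm d => d.lh + (a.lh + b.lh + 1)
  | a, b, .trans d₁ d₂ => d₁.lh + d₂.lh + (a.lh + b.lh + 1)
  | _, _, @Deriv.compat _ t u s x d =>
      d.lh + ((s.subst x t).lh + (s.subst x u).lh + 1) + (s.lh + 1 + 1)
  | _, _, @Deriv.subst _ t u s x d =>
      d.lh + ((t.subst x s).lh + (u.subst x s).lh + 1)
        + (t.lh + s.lh + 1 + u.lh + s.lh + 1 + 2)

/-- The set of variables occurring in a derivation. -/
def varsOf : {a b : Tm} → Deriv Ax a b → Finset ℕ
  | _, _, .ax A _ σ => (A.lhs.msubst σ).vars ∪ (A.rhs.msubst σ).vars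
  | _, _, .refl t => t.vars
  | _, _, .symm d => d.varsOf
  | _, _, .trans d₁ d₂ => d₁.varsOf ∪ d₂.varsOf
  | _, _, @Deriv.compat _ _ _ s x d => d.varsOf ∪ s.vars ∪ {x}
  | _, _, @Deriv.subst _ _ _ s x d => d.varsOf ∪ s.vars ∪ {x}

/-- The list (with multiplicities) of variables of a derivation bound by
applications of the Substitution rule. -/
def bvars : {a b : Tm} → Deriv Ax a b → List ℕ
  | _, _, .ax _ _ _ => []
  | _, _, .refl _ => []
  | _, _, .symm d => d.bvars
  | _, _, .trans d₁ d₂ => d₁.bvars ++ d₂.bvars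
  | _, _, .compat _ _ d => d.bvars
  | _, _, @Deriv.subst _ _ _ _ x d => x :: d.bvars

/-- The set of axioms of `Ax` occurring (i.e. used by an Axiom rule) in a
derivation. -/
def axiomsUsed : {a b : Tm} → Deriv Ax a b → Set Axm
  | _, _, .ax A _ _ => {A}
  | _, _, .refl _ => ∅
  | _, _, .symm d => d.axiomsUsed
  | _, _, .trans d₁ d₂ => d₁.axiomsUsed ∪ d₂.axiomsUsed
  | _, _, .compat _ _ d => d.axiomsUsed
  | _, _, .subst _ _ d => d.axiomsUsed

/-- A substitution is an injective renaming of the variables of an axiom. -/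
def InjRenaming (A : Axm) (σ : ℕ → Tm) : Prop :=
  (∀ x ∈ A.vars, ∃ y, σ x = Tm.var y) ∧ Set.InjOn σ ↑A.vars

/-- Condition (1) of Variable Normal Form: every application of the Axiom
rule is an injective renaming of an axiom. -/
def VNFax : {a b : Tm} → Deriv Ax a b → Prop
  | _, _, .ax A _ σ => InjRenaming A σ
  | _, _, .refl _ => True
  | _, _, .symm d => d.VNFax
  | _, _, .trans d₁ d₂ => d₁.VNFax ∧ d₂.VNFax
  | _, _, .compat _ _ d => d.VNFax
  | _, _, .subst _ _ d => d.VNFax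

/-- Variable Normal Form: every Axiom rule application is an injective
renaming of an axiom in `Ax`, and every variable occurring in the derivation
either occurs in the final equation or is bound by exactly one application
of the Substitution rule. -/
def VNF {a b : Tm} (d : Deriv Ax a b) : Prop :=
  d.VNFax ∧ ∀ x ∈ d.varsOf, x ∈ a.vars ∪ b.vars ∨ d.bvars.count x = 1

end Deriv

/-! ## Models, updates, update sequences -/

/-- `F` is a model of `Ax`: for every axiom `t = u` in `Ax` and every
assignment `ρ`, `⟦t⟧_{F,ρ} ⊑ ⟦u⟧_{F,ρ}`. -/
def IsModel (F : Frame) (Ax : Set Axm) : Prop :=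
  ∀ A ∈ Ax, ∀ ρ : Assignment, Approx (eval F ρ A.lhs) (eval F ρ A.rhs)

/-- `F` is a `κ`-model of the derivation `d`: `F` is a frame (its sections
are consistent sets) with `G(F) ≤ κ`, and for every axiom `t = u` of `Ax`
occurring in `d` and every assignment `ρ` with `dom(ρ) ⊆ var(d)` and
`G(ρ) ≤ κ`, we have `⟦t⟧_{F,ρ} ⊑ ⟦u⟧_{F,ρ}`. -/
def IsKModel {Ax : Set Axm} {a b : Tm} (F : Frame) (κ : ℕ) (d : Deriv Ax a b) : Prop :=
  F.Consistent ∧ F.gauge ≤ κ ∧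
  ∀ A ∈ d.axiomsUsed, ∀ ρ : Assignment,
    ↑ρ.support ⊆ (↑d.varsOf : Set ℕ) → ρ.gauge ≤ κ →
    Approx (eval F ρ A.lhs) (eval F ρ A.rhs)

/-- An update `f : v⃗ ↦ w` for the non-basic symbol `f = (k, a)`. -/
structure Upd where
  k : ℕ
  a : ℕ
  v : Fin a → D
  w : D

/-- The gauge `G(v⃗, w)` of an update. -/
def Upd.gauge (u : Upd) : ℕ := max (tupGauge u.v) u.w.gauge

/-- The frame entry corresponding to an update. -/
def Upd.entry (u : Upd) : Entry := ⟨u.k, u.a, (u.v, u.w)⟩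

/-- `F * (f : v⃗ ↦ w)`: the frame `F` updated by the update. -/
noncomputable def Frame.apUpd (F : Frame) (u : Upd) : Frame := insert u.entry F

/-- `F * σ` for a sequence of updates `σ`. -/
noncomputable def Frame.apSeq (F : Frame) (σ : List Upd) : Frame :=
  σ.foldl Frame.apUpd F

/-- `u` is an update based on `F`, `κ` and `d`: a generator `v⃗ ↦ w` with
`G(v⃗, w) ≤ κ` for a non-basic symbol `f`, obtained from an axiom
`f(t⃗) = u'` of `Ax` occurring in `d` and an assignment `ρ` by
`vᵢ = ρ(tᵢ)` and `w = ⟦u'⟧_{F,ρ}`. -/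
def IsUpdate {Ax : Set Axm} {a b : Tm} (F : Frame) (κ : ℕ) (d : Deriv Ax a b)
    (u : Upd) : Prop :=
  u.w ≠ D.star ∧ u.gauge ≤ κ ∧
  ∃ A ∈ d.axiomsUsed, ∃ ρ : Assignment,
    u = ⟨A.k, A.a, fun i => (A.args i).evalA ρ, eval F ρ A.rhs⟩

/-- `σ` is a sequence of updates based on `F`, `κ` and `d`: each update in
the sequence is an update based on the frame produced so far. -/
def IsUpdSeq {Ax : Set Axm} {a b : Tm} (κ : ℕ) (d : Deriv Ax a b) :
    Frame → List Upd → Prop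
  | _, [] => True
  | F, u :: σ => IsUpdate F κ d u ∧ IsUpdSeq κ d (F.apUpd u) σ

/-- The gauge `G(σ)` of a sequence of updates. -/
def seqGauge (σ : List Upd) : ℕ := (σ.map Upd.gauge).foldr max 0

/-- The extent `E(σ)` of a sequence of updates (maximal arity used). -/
def seqExt (σ : List Upd) : ℕ := (σ.map Upd.a).foldr max 0

/-! ## Instructions -/

/-- Instructions: `A[t→u]`, `A[t←u]` for axiom (instances) `t = u`, and
`S↑[t,s/x]`, `S↓[t,s/x]` for terms `t, s` and a variable `x`. -/
inductive Instr where
  | axF : Tm → Tm → Instr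
  | axB : Tm → Tm → Instr
  | sUp : Tm → Tm → ℕ → Instr
  | sDown : Tm → Tm → ℕ → Instr

/-- The length of an instruction. -/
def Instr.lh : Instr → ℕ
  | .axF t u => t.lh + u.lh + 1
  | .axB t u => t.lh + u.lh + 1
  | .sUp t s _ => t.lh + s.lh + 1
  | .sDown t s _ => t.lh + s.lh + 1

/-- The length of a sequence of instructions. -/
def instrsLh (τ : List Instr) : ℕ := (τ.map Instr.lh).sum

/-- An instruction is *for* the derivation `d` if its axiom instructions
carry (injective renamings of) axioms occurring in `d`. -/
def Instr.For {Ax : Set Axm} {a b : Tm} (d : Deriv Ax a b) : Instr → Prop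
  | .axF t u => ∃ A ∈ d.axiomsUsed, ∃ σ : ℕ → Tm,
      Deriv.InjRenaming A σ ∧ t = A.lhs.msubst σ ∧ u = A.rhs.msubst σ
  | .axB t u => ∃ A ∈ d.axiomsUsed, ∃ σ : ℕ → Tm,
      Deriv.InjRenaming A σ ∧ t = A.lhs.msubst σ ∧ u = A.rhs.msubst σ
  | .sUp _ _ _ => True
  | .sDown _ _ _ => True

/-- The instruction sequences `→Inst_𝒟` (first component) and `←Inst_𝒟`
(second component) extracted from a derivation. -/
def Deriv.insts {Ax : Set Axm} : {a b : Tm} → Deriv Ax a b → List Instr × List Instr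
  | _, _, .ax A _ σ =>
      ([.axF (A.lhs.msubst σ) (A.rhs.msubst σ)],
       [.axB (A.lhs.msubst σ) (A.rhs.msubst σ)])
  | _, _, .refl _ => ([], [])
  | _, _, .symm d => (d.insts.2, d.insts.1)
  | _, _, .trans d₁ d₂ => (d₁.insts.1 ++ d₂.insts.1, d₂.insts.2 ++ d₁.insts.2)
  | _, _, .compat _ _ d => d.insts
  | _, _, @Deriv.subst _ t u s x d =>
      (Instr.sUp t s x :: (d.insts.1 ++ [Instr.sDown u s x]),
       Instr.sUp u s x :: (d.insts.2 ++ [Instr.sDown t s x]))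

/-- `Ψ(t ← u, ⟨F, ρ⟩)`: for `t` of the form `f(t⃗)`, the update `f : v⃗ ↦ w`
with `vᵢ = ρ(tᵢ)` and `w = ⟦u⟧_{F,ρ}`. -/
noncomputable def Psi (t u : Tm) (F : Frame) (ρ : Assignment) : Upd :=
  match t with
  | .app k a args => ⟨k, a, fun i => eval F ρ (args i), eval F ρ u⟩
  | _ => ⟨0, 0, Fin.elim0, eval F ρ u⟩

/-- One step of the state transformer `Φ` (the frame `F` is the fixed base
frame; the state consists of the update sequence so far and the current
assignment). -/
noncomputable def PhiStep (F : Frame) (st : List Upd × Assignment) :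
    Instr → List Upd × Assignment
  | .axF _ _ => st
  | .axB t u => (st.1 ++ [Psi t u (F.apSeq st.1) st.2], st.2)
  | .sUp _ s x => (st.1, Finsupp.update st.2 x (eval (F.apSeq st.1) st.2 s))
  | .sDown _ _ x => (st.1, st.2.erase x)

/-- The state transformer `Φ(τ, ⟨F, σ, ρ⟩) = ⟨F, σ', ρ'⟩`, processing the
instruction sequence `τ` from left to right. -/
noncomputable def Phi (F : Frame) (τ : List Instr) (st : List Upd × Assignment) :
    List Upd × Assignment :=
  τ.foldl (PhiStep F) st

/-! ## Sub-derivations -/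

/-- `SubDeriv e d`: `e` is a sub-derivation of `d`. -/
inductive SubDeriv {Ax : Set Axm} :
    {a b c d : Tm} → Deriv Ax a b → Deriv Ax c d → Prop where
  | refl {a b : Tm} (d : Deriv Ax a b) : SubDeriv d d
  | symm {a b t u : Tm} {e : Deriv Ax a b} {d : Deriv Ax u t} :
      SubDeriv e d → SubDeriv e (Deriv.symm d)
  | transL {a b t s u : Tm} {e : Deriv Ax a b} {d₁ : Deriv Ax t s} {d₂ : Deriv Ax s u} :
      SubDeriv e d₁ → SubDeriv e (Deriv.trans d₁ d₂)
  | transR {a b t s u : Tm} {e : Deriv Ax a b} {d₁ : Deriv Ax t s} {d₂ : Deriv Ax s u} :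
      SubDeriv e d₂ → SubDeriv e (Deriv.trans d₁ d₂)
  | compat {a b t u : Tm} (s : Tm) (x : ℕ) {e : Deriv Ax a b} {d : Deriv Ax t u} :
      SubDeriv e d → SubDeriv e (Deriv.compat s x d)
  | subst {a b t u : Tm} (s : Tm) (x : ℕ) {e : Deriv Ax a b} {d : Deriv Ax t u} :
      SubDeriv e d → SubDeriv e (Deriv.subst s x d)


/-! ### Auxiliary development for the soundness proof -/

theorem approx_refl : ∀ v : D, Approx v v
  | .eps => .eps
  | .star => .star _
  | .b0 v => .b0 (approx_refl v)
  | .b1 v => .b1 (approx_refl v)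

theorem approx_trans : ∀ {a b c : D}, Approx a b → Approx b c → Approx a c := by
  intro a b c h1
  induction h1 generalizing c with
  | star => intro _; exact .star c
  | eps => intro h2; exact h2
  | b0 h ih => intro h2; cases h2 with | b0 h' => exact .b0 (ih h')
  | b1 h ih => intro h2; cases h2 with | b1 h' => exact .b1 (ih h')

theorem approx_eps {z : D} (h : Approx D.eps z) : z = D.eps := by cases h; rfl

theorem compat_symm {a b : D} (h : Compat a b) : Compat b a := h.elim .inr .inl

theorem compat_b0 {a b : D} (h : Compat a b) : Compat (D.b0 a) (D.b0 b) :=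
  h.elim (fun h => .inl (.b0 h)) (fun h => .inr (.b0 h))

theorem compat_b1 {a b : D} (h : Compat a b) : Compat (D.b1 a) (D.b1 b) :=
  h.elim (fun h => .inl (.b1 h)) (fun h => .inr (.b1 h))

/-- Two approximants of a common value are compatible. -/
theorem below_compat : ∀ {v w x : D}, Approx v x → Approx w x → Compat v w := by
  intro v w x h1
  induction h1 generalizing w with
  | star => intro _; exact .inl (.star _)
  | eps =>
    intro h2
    cases h2 with
    | star => exact .inr (.star _)
    | eps => exact .inl .eps
  | b0 h ih =>
    intro h2
    cases h2 with
    | star => exact .inr (.star _)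
    | b0 h' => exact compat_b0 (ih h')
  | b1 h ih =>
    intro h2
    cases h2 with
    | star => exact .inr (.star _)
    | b1 h' => exact compat_b1 (ih h')

/-- The join of two (compatible) values. -/
def joinD : D → D → D
  | .star, w => w
  | v, .star => v
  | .eps, .eps => .eps
  | .b0 v, .b0 w => .b0 (joinD v w)
  | .b1 v, .b1 w => .b1 (joinD v w)
  | _, _ => .star

theorem joinD_of_approx {a b : D} (h : Approx a b) : joinD a b = b := by
  induction h with
  | star v => cases v <;> rfl
  | eps => rfl
  | b0 _ ih => simp [joinD, ih]
  | b1 _ ih => simp [joinD, ih]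

theorem joinD_of_approx' {a b : D} (h : Approx b a) : joinD a b = a := by
  induction h with
  | star v => cases v <;> rfl
  | eps => rfl
  | b0 _ ih => simp [joinD, ih]
  | b1 _ ih => simp [joinD, ih]

theorem joinD_left {a b : D} (h : Compat a b) : Approx a (joinD a b) := by
  rcases h with h | h
  · rw [joinD_of_approx h]; exact h
  · rw [joinD_of_approx' h]; exact approx_refl a

theorem joinD_right {a b : D} (h : Compat a b) : Approx b (joinD a b) := by
  rcases h with h | h
  · rw [joinD_of_approx h]; exact approx_refl b
  · rw [joinD_of_approx' h]; exact h

/-- Greatest elements of finite nonempty pairwise-compatible finsets. -/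
theorem exists_greatest_finset : ∀ s : Finset D, s.Nonempty →
    (∀ a ∈ s, ∀ b ∈ s, Compat a b) → ∃ m ∈ s, ∀ v ∈ s, Approx v m := by
  intro s
  induction s using Finset.induction_on with
  | empty => intro h; exact absurd h (by simp)
  | @insert a s ha ih =>
    intro _ hch
    by_cases hs : s.Nonempty
    · obtain ⟨m, hm, hmax⟩ := ih hs fun x hx y hy =>
        hch x (Finset.mem_insert_of_mem hx) y (Finset.mem_insert_of_mem hy)
      rcases hch a (Finset.mem_insert_self a s) m (Finset.mem_insert_of_mem hm) with h | h
      · refine ⟨m, Finset.mem_insert_of_mem hm, fun v hv => ?_⟩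
        rcases Finset.mem_insert.mp hv with rfl | hv
        · exact h
        · exact hmax v hv
      · refine ⟨a, Finset.mem_insert_self a s, fun v hv => ?_⟩
        rcases Finset.mem_insert.mp hv with rfl | hv
        · exact approx_refl v
        · exact approx_trans (hmax v hv) h
    · rw [Finset.not_nonempty_iff_eq_empty] at hs
      subst hs
      exact ⟨a, Finset.mem_insert_self a _, fun v hv => by
        rcases Finset.mem_insert.mp hv with rfl | hv
        · exact approx_refl v
        · exact absurd hv (by simp)⟩

theorem exists_greatest {S : Set D} (hfin : S.Finite) (hne : S.Nonempty)
    (hch : ∀ a ∈ S, ∀ b ∈ S, Compat a b) : ∃ m ∈ S, ∀ v ∈ S, Approx v m := by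
  obtain ⟨m, hm, h⟩ := exists_greatest_finset hfin.toFinset
    (by simpa using hne)
    (fun a ha b hb => hch a (by simpa using ha) b (by simpa using hb))
  exact ⟨m, by simpa using hm, fun v hv => h v (by simpa using hv)⟩

theorem approx_maxapprx {S : Set D} (hex : ∃ m, m ∈ S ∧ ∀ v ∈ S, Approx v m)
    {v : D} (hv : v ∈ S) : Approx v (maxapprx S) := by
  rw [maxapprx, dif_pos hex]
  exact hex.choose_spec.2 v hv

theorem maxapprx_mem_or (S : Set D) : maxapprx S ∈ S ∨ maxapprx S = D.star := by
  rw [maxapprx]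
  split
  · next h => exact Or.inl h.choose_spec.1
  · exact Or.inr rfl

/-! ### Frame application lemmas -/

theorem setAt_finite (F : Frame) (k a : ℕ) (x : Fin a → D) : (F.setAt k a x).Finite :=
  Set.Finite.subset (F.finite_toSet.image fun e => e.2.2.2)
    (by rintro v ⟨w, _, hmem⟩; exact ⟨_, hmem, rfl⟩)

theorem setAt_chain {F : Frame} (hF : F.Consistent) (k a : ℕ) (x : Fin a → D) :
    ∀ p ∈ F.setAt k a x, ∀ q ∈ F.setAt k a x, Compat p q := by
  rintro p ⟨w1, hw1, h1⟩ q ⟨w2, hw2, h2⟩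
  exact hF.2 k a w1 w2 p q h1 h2 fun i => below_compat (hw1 i) (hw2 i)

theorem app_approx_of_mem {F : Frame} (hF : F.Consistent) {k a : ℕ} {x : Fin a → D}
    {v : D} (hv : v ∈ F.setAt k a x) : Approx v (F.app k a x) := by
  obtain ⟨m, hm, hmax⟩ := exists_greatest (setAt_finite F k a x) ⟨v, hv⟩ (setAt_chain hF k a x)
  exact approx_maxapprx ⟨m, hm, hmax⟩ hv

theorem tapprox_refl {n : ℕ} (x : Fin n → D) : TApprox x x := fun i => approx_refl _

theorem app_mono {F F' : Frame} (hF' : F'.Consistent) (hsub : F ⊆ F') {k a : ℕ}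
    {x x' : Fin a → D} (hx : TApprox x x') : Approx (F.app k a x) (F'.app k a x') := by
  rcases maxapprx_mem_or (F.setAt k a x) with hmem | hstar
  · obtain ⟨w, hw, hent⟩ := hmem
    exact app_approx_of_mem hF' ⟨w, fun i => approx_trans (hw i) (hx i), hsub hent⟩
  · rw [Frame.app, hstar]; exact .star _

/-! ### Evaluation lemmas -/

theorem eval_mono {F F' : Frame} (hF' : F'.Consistent) (hsub : F ⊆ F')
    {ρ ρ' : Assignment} : ∀ t : Tm, (∀ x ∈ t.vars, Approx (ρ x) (ρ' x)) →
    Approx (eval F ρ t) (eval F' ρ' t) := by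
  intro t
  induction t with
  | var x => intro h; exact h x (by simp [Tm.vars])
  | eps => intro _; exact .eps
  | s0 t ih => intro h; exact .b0 (ih h)
  | s1 t ih => intro h; exact .b1 (ih h)
  | app k a args ih =>
    intro h
    simp only [eval]
    exact app_mono hF' hsub fun i => ih i fun x hx =>
      h x (by simp only [Tm.vars, Finset.mem_biUnion]; exact ⟨i, Finset.mem_univ i, hx⟩)

theorem eval_msubst {F : Frame} {ρ ρ' : Assignment} {σ : ℕ → Tm} :
    ∀ t : Tm, (∀ x ∈ t.vars, eval F ρ (σ x) = ρ' x) →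
    eval F ρ (t.msubst σ) = eval F ρ' t := by
  intro t
  induction t with
  | var x => intro h; exact h x (by simp [Tm.vars])
  | eps => intro _; rfl
  | s0 t ih => intro h; simp only [Tm.msubst, eval]; rw [ih h]
  | s1 t ih => intro h; simp only [Tm.msubst, eval]; rw [ih h]
  | app k a args ih =>
    intro h
    simp only [Tm.msubst, eval]
    congr 1
    funext i
    exact ih i fun x hx =>
      h x (by simp only [Tm.vars, Finset.mem_biUnion]; exact ⟨i, Finset.mem_univ i, hx⟩)

theorem eval_subst {F : Frame} {ρ : Assignment} {x : ℕ} {s : Tm} :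
    ∀ t : Tm, eval F ρ (t.subst x s) = eval F (ρ.update x (eval F ρ s)) t := by
  intro t
  induction t with
  | var y =>
    simp only [Tm.subst, eval, Finsupp.coe_update]
    by_cases h : y = x
    · subst h; simp [eval]
    · simp [h, eval, Function.update_of_ne h]
  | eps => rfl
  | s0 t ih => simp only [Tm.subst, eval]; rw [ih]
  | s1 t ih => simp only [Tm.subst, eval]; rw [ih]
  | app k a args ih =>
    simp only [Tm.subst, eval]
    congr 1
    funext i
    exact ih i

theorem eval_toTm (F : Frame) (ρ : Assignment) (g : GVar) :
    eval F ρ g.toTm = g.evalA ρ := by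
  cases g <;> simp [GVar.toTm, GVar.evalA, eval]

theorem eval_lhs (F : Frame) (ρ : Assignment) (A : Axm) :
    eval F ρ A.lhs = F.app A.k A.a fun i => (A.args i).evalA ρ := by
  simp only [Axm.lhs, eval, eval_toTm]

theorem eval_gvar_msubst {F : Frame} {ρ ρ' : Assignment} {σ : ℕ → Tm} (g : GVar)
    (h : ∀ x ∈ g.vars, eval F ρ (σ x) = ρ' x) :
    eval F ρ (g.toTm.msubst σ) = g.evalA ρ' := by
  cases g with
  | var x => exact h x (by simp [GVar.vars])
  | eps => rfl
  | s0 x => simp only [GVar.toTm, Tm.msubst, eval, GVar.evalA]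
            rw [h x (by simp [GVar.vars])]
  | s1 x => simp only [GVar.toTm, Tm.msubst, eval, GVar.evalA]
            rw [h x (by simp [GVar.vars])]

/-! ### Assignments from functions, gauges -/

/-- The assignment agreeing with `h` on `s` and `*` elsewhere. -/
def mkAsg (s : Finset ℕ) (h : ℕ → D) : Assignment :=
  ⟨s.filter fun x => h x ≠ D.star,
   fun x => if x ∈ s then h x else D.star,
   by
    intro a
    simp only [Finset.mem_filter]
    constructor
    · rintro ⟨ha, hne⟩; rw [if_pos ha]; exact hne
    · intro hne
      by_cases ha : a ∈ s
      · exact ⟨ha, by rwa [if_pos ha] at hne⟩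
      · rw [if_neg ha] at hne; exact absurd rfl hne⟩

theorem mkAsg_apply (s : Finset ℕ) (h : ℕ → D) (x : ℕ) :
    (mkAsg s h : ℕ → D) x = if x ∈ s then h x else D.star := rfl

theorem D.gauge_pos : ∀ v : D, 1 ≤ v.gauge := by
  intro v; cases v <;> simp [D.gauge]

theorem Tm.lh_pos : ∀ t : Tm, 1 ≤ t.lh := by
  intro t; cases t <;> simp [Tm.lh]

theorem gauge_apply_le (ρ : Assignment) (x : ℕ) : (ρ x).gauge ≤ max ρ.gauge 1 := by
  by_cases h : x ∈ ρ.support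
  · exact le_trans (Finset.le_sup (f := fun x => (ρ x).gauge) h) (le_max_left _ _)
  · rw [Finsupp.notMem_support_iff.mp h]; exact le_max_right _ _

theorem gauge_update_le (ρ : Assignment) (x : ℕ) (v : D) :
    Assignment.gauge (ρ.update x v) ≤ max (max ρ.gauge 1) v.gauge := by
  refine Finset.sup_le fun y hy => ?_
  simp only [Finsupp.coe_update]
  by_cases h : y = x
  · subst h; rw [Function.update_self]; exact le_max_right _ _
  · rw [Function.update_of_ne h]
    exact le_trans (gauge_apply_le ρ y) (le_max_left _ _)

theorem gauge_mkAsg_le {s : Finset ℕ} {h : ℕ → D} {n : ℕ}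
    (hb : ∀ x ∈ s, (h x).gauge ≤ n) : (mkAsg s h).gauge ≤ n := by
  refine Finset.sup_le fun y hy => ?_
  have hys : y ∈ s := (Finset.mem_filter.mp hy).1
  rw [show ((mkAsg s h : ℕ → D) y) = h y from by rw [mkAsg_apply, if_pos hys]]
  exact hb y hys

theorem val_gauge_le {F : Frame} {k a : ℕ} {w : Fin a → D} {v : D}
    (h : (⟨k, a, (w, v)⟩ : Entry) ∈ F) : v.gauge ≤ F.gauge :=
  le_trans (le_max_right (tupGauge w) v.gauge) (Finset.le_sup (f := Entry.gauge) h)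

theorem eval_gauge (F : Frame) (ρ : Assignment) : ∀ t : Tm,
    (eval F ρ t).gauge ≤ max F.gauge ρ.gauge + t.lh := by
  intro t
  induction t with
  | var x => have := gauge_apply_le ρ x; simp only [eval, Tm.lh]; omega
  | eps => simp [eval, D.gauge, Tm.lh]
  | s0 t ih => simp only [eval, D.gauge, Tm.lh]; omega
  | s1 t ih => simp only [eval, D.gauge, Tm.lh]; omega
  | app k a args ih =>
    simp only [eval, Tm.lh]
    rcases maxapprx_mem_or (F.setAt k a fun i => eval F ρ (args i)) with hmem | hstar
    · obtain ⟨w, _, hent⟩ := hmem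
      have h1 : (F.app k a fun i => eval F ρ (args i)).gauge ≤ F.gauge := val_gauge_le hent
      omega
    · rw [show (F.app k a fun i => eval F ρ (args i)) = D.star from hstar]
      simp only [D.gauge]; omega

theorem evalA_gauge (ρ : Assignment) (g : GVar) :
    (g.evalA ρ).gauge ≤ max ρ.gauge 1 + 1 := by
  cases g with
  | var x => have := gauge_apply_le ρ x; simp only [GVar.evalA]; omega
  | eps => simp [GVar.evalA, D.gauge]
  | s0 x => have := gauge_apply_le ρ x; simp only [GVar.evalA, D.gauge]; omega
  | s1 x => have := gauge_apply_le ρ x; simp only [GVar.evalA, D.gauge]; omega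

/-! ### Frames and update sequences -/

theorem apSeq_nil (F : Frame) : F.apSeq [] = F := rfl

theorem apSeq_cons (F : Frame) (u : Upd) (σ : List Upd) :
    F.apSeq (u :: σ) = (F.apUpd u).apSeq σ := rfl

theorem apSeq_append (F : Frame) (σ₁ σ₂ : List Upd) :
    F.apSeq (σ₁ ++ σ₂) = (F.apSeq σ₁).apSeq σ₂ := by
  simp [Frame.apSeq, List.foldl_append]

theorem subset_apUpd (F : Frame) (u : Upd) : F ⊆ F.apUpd u :=
  Finset.subset_insert _ _

theorem subset_apSeq (F : Frame) : ∀ σ : List Upd, F ⊆ F.apSeq σ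
  | [] => Finset.Subset.refl F
  | u :: σ => Finset.Subset.trans (subset_apUpd F u) (subset_apSeq _ σ)

theorem gauge_apUpd (F : Frame) (u : Upd) : (F.apUpd u).gauge ≤ max u.gauge F.gauge := by
  unfold Frame.apUpd Frame.gauge
  rw [Finset.sup_insert]
  exact le_refl _

theorem isUpdate_mono {Ax : Set Axm} {a b c d' : Tm} {e : Deriv Ax a b}
    {e' : Deriv Ax c d'} (h : e.axiomsUsed ⊆ e'.axiomsUsed) {κ : ℕ} {F : Frame}
    {u : Upd} : IsUpdate F κ e u → IsUpdate F κ e' u := by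
  rintro ⟨h1, h2, A, hA, ρ, h3⟩
  exact ⟨h1, h2, A, h hA, ρ, h3⟩

theorem isUpdSeq_mono {Ax : Set Axm} {a b c d' : Tm} {e : Deriv Ax a b}
    {e' : Deriv Ax c d'} (h : e.axiomsUsed ⊆ e'.axiomsUsed) {κ : ℕ} :
    ∀ (σ : List Upd) (F : Frame), IsUpdSeq κ e F σ → IsUpdSeq κ e' F σ
  | [], _, _ => trivial
  | u :: σ, F, ⟨h1, h2⟩ => ⟨isUpdate_mono h h1, isUpdSeq_mono h σ _ h2⟩

theorem isUpdSeq_append {Ax : Set Axm} {a b : Tm} {e : Deriv Ax a b} {κ : ℕ} :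
    ∀ (σ₁ : List Upd) (F : Frame) (σ₂ : List Upd), IsUpdSeq κ e F σ₁ →
    IsUpdSeq κ e (F.apSeq σ₁) σ₂ → IsUpdSeq κ e F (σ₁ ++ σ₂)
  | [], _, _, _, h₂ => h₂
  | u :: σ₁, F, σ₂, ⟨h1, h2⟩, h₂ =>
    ⟨h1, isUpdSeq_append σ₁ (F.apUpd u) σ₂ h2 h₂⟩

/-! ### Entry injectivity and unifiability -/

theorem entry_inj {k a : ℕ} {w : Fin a → D} {v : D} {k' a' : ℕ} {w' : Fin a' → D}
    {v' : D} (h : (⟨k, a, (w, v)⟩ : Entry) = ⟨k', a', (w', v')⟩) :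
    k = k' ∧ ∃ ha : a = a', (∀ i, w i = w' (Fin.cast ha i)) ∧ v = v' := by
  obtain ⟨h1, h2⟩ := Sigma.mk.inj_iff.mp h
  refine ⟨h1, ?_⟩
  obtain ⟨h3, h4⟩ := Sigma.mk.inj_iff.mp (eq_of_heq h2)
  subst h3
  have h5 : (w, v) = (w', v') := eq_of_heq h4
  obtain ⟨hw, hv⟩ := Prod.mk.inj h5
  subst hw
  exact ⟨rfl, fun i => rfl, hv⟩

theorem unif_of_approx {g g' : GVar} {ρ ρ' : Assignment}
    (h : Approx (g.evalA ρ) (g'.evalA ρ')) : GVar.unif g g' := by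
  cases g <;> cases g' <;> simp only [GVar.unif, GVar.evalA] at h ⊢ <;>
    first | trivial | cases h

/-! ### The key joining construction -/

theorem approx_b0_cases {a z : D} (h : Approx (D.b0 a) z) :
    ∃ c, z = D.b0 c ∧ Approx a c := by
  cases h with | b0 h' => exact ⟨_, rfl, h'⟩

theorem approx_b1_cases {a z : D} (h : Approx (D.b1 a) z) :
    ∃ c, z = D.b1 c ∧ Approx a c := by
  cases h with | b1 h' => exact ⟨_, rfl, h'⟩

/-- Extract the value of the variable of a generalized variable from
a value of the generalized variable. -/
def argJoin (g : GVar) (j : D) : D :=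
  match g, j with
  | .var _, j => j
  | .s0 _, .b0 c => c
  | .s1 _, .b1 c => c
  | _, _ => D.star

open Classical in
/-- The assignment used in the consistency-preservation argument. -/
noncomputable def coreAsg (A : Axm) (w₀ : Fin A.a → D) (ρ : Assignment) : Assignment :=
  mkAsg (A.lhsVars ∪ ρ.support) fun x =>
    if hx : ∃ i, x ∈ (A.args i).vars
    then argJoin (A.args hx.choose) (joinD (w₀ hx.choose) ((A.args hx.choose).evalA ρ))
    else ρ x

/-- The core compatibility argument: a value of a generator of `F` at arguments
compatible with an instance of an axiom's left-hand side is compatible with the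
value of the corresponding instance of the right-hand side. -/
theorem compat_core {Ax : Set Axm} (hAx : NiceAxioms Ax) {A : Axm} (hA : A ∈ Ax)
    {F : Frame} (hFc : F.Consistent) (hM : IsModel F Ax) (ρ : Assignment)
    {w₀ : Fin A.a → D} {v₀ : D} (hmem : (⟨A.k, A.a, (w₀, v₀)⟩ : Entry) ∈ F)
    (hcomp : TCompat w₀ fun i => (A.args i).evalA ρ) :
    Compat v₀ (eval F ρ A.rhs) := by
  classical
  have hcc : ∀ i, Compat (w₀ i) ((A.args i).evalA ρ) := hcomp
  have hj1 : ∀ i, Approx (w₀ i) (joinD (w₀ i) ((A.args i).evalA ρ)) :=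
    fun i => joinD_left (hcc i)
  have hj2 : ∀ i, Approx ((A.args i).evalA ρ) (joinD (w₀ i) ((A.args i).evalA ρ)) :=
    fun i => joinD_right (hcc i)
  have hchoose : ∀ (i : Fin A.a) (x : ℕ), x ∈ (A.args i).vars →
      ∀ hx : ∃ j, x ∈ (A.args j).vars, hx.choose = i := by
    intro i x hxi hx
    by_contra hne
    exact Finset.disjoint_left.mp (hAx.distinct A hA _ i hne) hx.choose_spec hxi
  have hρ'x : ∀ (i : Fin A.a) (x : ℕ), x ∈ (A.args i).vars →
      (coreAsg A w₀ ρ : ℕ → D) x =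
        argJoin (A.args i) (joinD (w₀ i) ((A.args i).evalA ρ)) := by
    intro i x hxi
    have hxl : x ∈ A.lhsVars := Finset.mem_biUnion.mpr ⟨i, Finset.mem_univ i, hxi⟩
    have hx : ∃ j, x ∈ (A.args j).vars := ⟨i, hxi⟩
    rw [coreAsg, mkAsg_apply, if_pos (Finset.mem_union_left _ hxl), dif_pos hx,
      hchoose i x hxi hx]
  have hmono : ∀ x, Approx (ρ x) ((coreAsg A w₀ ρ : ℕ → D) x) := by
    intro x
    by_cases hx : ∃ j, x ∈ (A.args j).vars
    · obtain ⟨i, hxi⟩ := hx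
      rw [hρ'x i x hxi]
      have h2 := hj2 i
      cases hgi : A.args i with
      | var y =>
        rw [hgi] at hxi h2
        simp only [GVar.vars, Finset.mem_singleton] at hxi
        subst hxi
        exact h2
      | eps => rw [hgi] at hxi; simp [GVar.vars] at hxi
      | s0 y =>
        rw [hgi] at hxi h2
        simp only [GVar.vars, Finset.mem_singleton] at hxi
        subst hxi
        obtain ⟨c, hc, hc2⟩ := approx_b0_cases h2
        rw [hc]
        exact hc2
      | s1 y =>
        rw [hgi] at hxi h2
        simp only [GVar.vars, Finset.mem_singleton] at hxi
        subst hxi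
        obtain ⟨c, hc, hc2⟩ := approx_b1_cases h2
        rw [hc]
        exact hc2
    · rw [coreAsg, mkAsg_apply]
      by_cases hxs : x ∈ A.lhsVars ∪ ρ.support
      · rw [if_pos hxs, dif_neg hx]; exact approx_refl _
      · rw [if_neg hxs]
        have : x ∉ ρ.support := fun hc => hxs (Finset.mem_union_right _ hc)
        rw [Finsupp.notMem_support_iff.mp this]
        exact .star _
  have hevalA : ∀ i, (A.args i).evalA (coreAsg A w₀ ρ) =
      joinD (w₀ i) ((A.args i).evalA ρ) := by
    intro i
    have h2 := hj2 i
    cases hgi : A.args i with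
    | var y =>
      have hy := hρ'x i y (by rw [hgi]; simp [GVar.vars])
      rw [hgi] at hy
      show (coreAsg A w₀ ρ : ℕ → D) y = joinD (w₀ i) ((GVar.var y).evalA ρ)
      rw [hy]
      rfl
    | eps =>
      rw [hgi] at h2
      have h3 := approx_eps h2
      show D.eps = joinD (w₀ i) ((GVar.eps).evalA ρ)
      rw [h3]
    | s0 y =>
      have hy := hρ'x i y (by rw [hgi]; simp [GVar.vars])
      rw [hgi] at hy h2
      obtain ⟨c, hc, _⟩ := approx_b0_cases h2
      show D.b0 ((coreAsg A w₀ ρ : ℕ → D) y) = joinD (w₀ i) ((GVar.s0 y).evalA ρ)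
      rw [hy, hc]
      rfl
    | s1 y =>
      have hy := hρ'x i y (by rw [hgi]; simp [GVar.vars])
      rw [hgi] at hy h2
      obtain ⟨c, hc, _⟩ := approx_b1_cases h2
      show D.b1 ((coreAsg A w₀ ρ : ℕ → D) y) = joinD (w₀ i) ((GVar.s1 y).evalA ρ)
      rw [hy, hc]
      rfl
  have hsub : v₀ ∈ F.setAt A.k A.a fun i => (A.args i).evalA (coreAsg A w₀ ρ) :=
    ⟨w₀, fun i => by show Approx (w₀ i) ((A.args i).evalA (coreAsg A w₀ ρ)); rw [hevalA i]; exact hj1 i, hmem⟩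
  have h1 : Approx v₀ (eval F (coreAsg A w₀ ρ) A.lhs) := by
    rw [eval_lhs]
    exact app_approx_of_mem hFc hsub
  have h2 := hM A hA (coreAsg A w₀ ρ)
  have h3 : Approx (eval F ρ A.rhs) (eval F (coreAsg A w₀ ρ) A.rhs) :=
    eval_mono hFc (Finset.Subset.refl F) A.rhs fun x _ => hmono x
  exact below_compat (approx_trans h1 h2) h3

/-! ### Preservation of consistency and the model property under updates -/

theorem update_consistent {Ax : Set Axm} (hAx : NiceAxioms Ax) {A : Axm} (hA : A ∈ Ax)
    {F : Frame} (hFc : F.Consistent) (hM : IsModel F Ax) (ρ : Assignment)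
    (hw : eval F ρ A.rhs ≠ D.star) :
    (F.apUpd ⟨A.k, A.a, fun i => (A.args i).evalA ρ, eval F ρ A.rhs⟩).Consistent := by
  constructor
  · intro k a w v hmem
    rcases Finset.mem_insert.mp hmem with heq | hold
    · obtain ⟨_, _, _, hv⟩ := entry_inj heq
      rw [hv]; exact hw
    · exact hFc.1 k a w v hold
  · intro k a w w' vv vv' h1 h2 hcmp
    rcases Finset.mem_insert.mp h1 with he1 | ho1 <;>
      rcases Finset.mem_insert.mp h2 with he2 | ho2
    · obtain ⟨_, _, _, hv1⟩ := entry_inj he1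
      obtain ⟨_, _, _, hv2⟩ := entry_inj he2
      rw [hv1, hv2]; exact .inl (approx_refl _)
    · -- first is the new entry, second is old
      obtain ⟨hk, ha, hwf, hv1⟩ := entry_inj he1
      subst hk; subst ha
      have hwv : ∀ i, w i = (A.args i).evalA ρ := by
        intro i
        rw [hwf i]
        exact congrArg (fun j => (A.args j).evalA ρ) (Fin.ext rfl)
      have hc : TCompat w' fun i => (A.args i).evalA ρ := by
        intro i
        have := compat_symm (hcmp i)
        rw [hwv i] at this
        exact this
      have := compat_core hAx hA hFc hM ρ ho2 hc
      rw [hv1]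
      exact compat_symm this
    · -- first is old, second is new
      obtain ⟨hk, ha, hwf, hv2⟩ := entry_inj he2
      subst hk; subst ha
      have hwv : ∀ i, w' i = (A.args i).evalA ρ := by
        intro i
        rw [hwf i]
        exact congrArg (fun j => (A.args j).evalA ρ) (Fin.ext rfl)
      have hc : TCompat w fun i => (A.args i).evalA ρ := by
        intro i
        have := hcmp i
        rw [hwv i] at this
        exact this
      have := compat_core hAx hA hFc hM ρ ho1 hc
      rw [hv2]
      exact this
    · exact hFc.2 k a w w' vv vv' ho1 ho2 hcmp

theorem update_model {Ax : Set Axm} (hAx : NiceAxioms Ax) {A : Axm} (hA : A ∈ Ax)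
    {F : Frame} (hFc : F.Consistent) (hM : IsModel F Ax) (ρ : Assignment)
    (hw : eval F ρ A.rhs ≠ D.star) :
    IsModel (F.apUpd ⟨A.k, A.a, fun i => (A.args i).evalA ρ, eval F ρ A.rhs⟩) Ax := by
  intro B hB ρ₀
  have hF'c := update_consistent hAx hA hFc hM ρ hw
  rw [eval_lhs, Frame.app]
  rcases maxapprx_mem_or
      ((F.apUpd ⟨A.k, A.a, fun i => (A.args i).evalA ρ, eval F ρ A.rhs⟩).setAt B.k B.a
        fun i => (B.args i).evalA ρ₀) with hmem | hstar
  · obtain ⟨wv, hwv, hent⟩ := hmem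
    rcases Finset.mem_insert.mp hent with heq | hold
    · obtain ⟨hk, ha, hwf, hv⟩ := entry_inj heq
      have h' : A.a = B.a := ha.symm
      have hunif : ∀ i : Fin A.a, GVar.unif (A.args i) (B.args (Fin.cast h' i)) := by
        intro i
        have h1 : Approx (wv (Fin.cast h' i)) ((B.args (Fin.cast h' i)).evalA ρ₀) :=
          hwv _
        have h2 : wv (Fin.cast h' i) = (A.args i).evalA ρ := by
          rw [hwf (Fin.cast h' i)]
          exact congrArg (fun j => (A.args j).evalA ρ) (Fin.ext rfl)
        rw [h2] at h1
        exact unif_of_approx h1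
      have hAB : A = B := hAx.unique A hA B hB hk.symm h' hunif
      subst hAB
      rw [hv]
      have hvars : ∀ x ∈ A.lhsVars, Approx (ρ x) (ρ₀ x) := by
        intro x hx
        obtain ⟨i, _, hxi⟩ := Finset.mem_biUnion.mp hx
        have h1 : Approx (wv i) ((A.args i).evalA ρ₀) := hwv i
        have h2 : wv i = (A.args i).evalA ρ := by
          rw [hwf i]
          exact congrArg (fun j => (A.args j).evalA ρ) (Fin.ext rfl)
        rw [h2] at h1
        cases hgi : A.args i with
        | var y =>
          rw [hgi] at h1 hxi
          simp only [GVar.vars, Finset.mem_singleton] at hxi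
          subst hxi
          exact h1
        | eps => rw [hgi] at hxi; simp [GVar.vars] at hxi
        | s0 y =>
          rw [hgi] at h1 hxi
          simp only [GVar.vars, Finset.mem_singleton] at hxi
          subst hxi
          simp only [GVar.evalA] at h1
          cases h1 with | b0 h1' => exact h1'
        | s1 y =>
          rw [hgi] at h1 hxi
          simp only [GVar.vars, Finset.mem_singleton] at hxi
          subst hxi
          simp only [GVar.evalA] at h1
          cases h1 with | b1 h1' => exact h1'
      exact eval_mono hF'c (subset_apUpd F _) A.rhs fun x hx =>
        hvars x (hAx.rhsVars A hA hx)
    · have h1 : Approx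
          (maxapprx ((F.apUpd ⟨A.k, A.a, fun i => (A.args i).evalA ρ,
              eval F ρ A.rhs⟩).setAt B.k B.a fun i => (B.args i).evalA ρ₀))
          (F.app B.k B.a fun i => (B.args i).evalA ρ₀) :=
        app_approx_of_mem hFc ⟨wv, hwv, hold⟩
      have h2 : Approx (F.app B.k B.a fun i => (B.args i).evalA ρ₀)
          (eval F ρ₀ B.rhs) := by
        rw [← eval_lhs]; exact hM B hB ρ₀
      have h3 := eval_mono hF'c (subset_apUpd F _) B.rhs
        (fun x _ => approx_refl (ρ₀ x))
      exact approx_trans (approx_trans h1 h2) h3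
  · rw [hstar]; exact .star _

theorem update_pointwise {ρ : Assignment} {x : ℕ} {v v' : D} (h : Approx v v') :
    ∀ y, Approx ((ρ.update x v : Assignment) y) ((ρ.update x v' : Assignment) y) := by
  intro y
  simp only [Finsupp.coe_update]
  by_cases hyx : y = x
  · subst hyx; rw [Function.update_self, Function.update_self]; exact h
  · rw [Function.update_of_ne hyx, Function.update_of_ne hyx]; exact approx_refl _

/-- The main induction: given a consistent model `F` of `Ax` and enough budget
`κ`, every sub-derivation in axiom-variable-normal form can be processed in
both directions by update sequences. -/
theorem key_soundness {Ax : Set Axm} (hAx : NiceAxioms Ax) (κ : ℕ) {t u : Tm}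
    (e : Deriv Ax t u) :
    ∀ (F : Frame) (ρ : Assignment), e.VNFax → F.Consistent → IsModel F Ax →
    max F.gauge ρ.gauge + e.lh ≤ κ →
    ((∃ σ, IsUpdSeq κ e F σ ∧ (F.apSeq σ).Consistent ∧ IsModel (F.apSeq σ) Ax ∧
        (F.apSeq σ).gauge ≤ max F.gauge ρ.gauge + e.lh ∧
        Approx (eval F ρ t) (eval (F.apSeq σ) ρ u)) ∧
     (∃ σ, IsUpdSeq κ e F σ ∧ (F.apSeq σ).Consistent ∧ IsModel (F.apSeq σ) Ax ∧
        (F.apSeq σ).gauge ≤ max F.gauge ρ.gauge + e.lh ∧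
        Approx (eval F ρ u) (eval (F.apSeq σ) ρ t))) := by
  induction e with
  | ax A hA σs =>
    intro F ρ hvnf hFc hM hbud
    have hρσ : ∀ x ∈ A.vars, eval F ρ (σs x) = ((mkAsg A.vars fun x => eval F ρ (σs x)) : ℕ → D) x := by
      intro x hx
      rw [mkAsg_apply, if_pos hx]
    have hlhs_vars : ∀ (i : Fin A.a), ∀ x ∈ (A.args i).vars, x ∈ A.vars :=
      fun i x hx => Finset.mem_union_left _
        (Finset.mem_biUnion.mpr ⟨i, Finset.mem_univ i, hx⟩)
    have hrhs : eval F ρ (A.rhs.msubst σs) =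
        eval F (mkAsg A.vars fun x => eval F ρ (σs x)) A.rhs :=
      eval_msubst A.rhs fun x hx => hρσ x (Finset.mem_union_right _ hx)
    have hlhs : eval F ρ (A.lhs.msubst σs) =
        F.app A.k A.a fun i => (A.args i).evalA (mkAsg A.vars fun x => eval F ρ (σs x)) := by
      rw [show A.lhs.msubst σs = Tm.app A.k A.a fun i => (A.args i).toTm.msubst σs from rfl]
      simp only [eval]
      congr 1
      funext i
      exact eval_gvar_msubst (A.args i) fun x hx => hρσ x (hlhs_vars i x hx)
    have hgF : F.gauge ≤ max F.gauge ρ.gauge + (Deriv.ax A hA σs).lh := by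
      have := Tm.lh_pos (A.lhs.msubst σs)
      simp only [Deriv.lh]
      omega
    constructor
    · -- forward: no updates needed
      refine ⟨[], trivial, hFc, hM, hgF, ?_⟩
      rw [apSeq_nil, hlhs, hrhs, ← eval_lhs]
      exact hM A hA _
    · -- backward
      by_cases hw : eval F (mkAsg A.vars fun x => eval F ρ (σs x)) A.rhs = D.star
      · refine ⟨[], trivial, hFc, hM, hgF, ?_⟩
        rw [apSeq_nil, hrhs, hw]
        exact .star _
      · obtain ⟨hren, -⟩ := hvnf
        have hρσg : Assignment.gauge (mkAsg A.vars fun x => eval F ρ (σs x)) ≤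
            max ρ.gauge 1 := by
          refine gauge_mkAsg_le ?_
          intro x hx
          obtain ⟨y, hy⟩ := hren x hx
          rw [hy]
          exact gauge_apply_le ρ y
        have hupg : Upd.gauge ⟨A.k, A.a,
            (fun i => (A.args i).evalA (mkAsg A.vars fun x => eval F ρ (σs x))),
            eval F (mkAsg A.vars fun x => eval F ρ (σs x)) A.rhs⟩ ≤
            max F.gauge ρ.gauge + (Deriv.ax A hA σs).lh := by
          have h1 : tupGauge (fun i => (A.args i).evalA
              (mkAsg A.vars fun x => eval F ρ (σs x))) ≤ ρ.gauge + 2 := by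
            refine Finset.sup_le fun i _ => ?_
            show ((A.args i).evalA (mkAsg A.vars fun x => eval F ρ (σs x))).gauge ≤ _
            have h2 := evalA_gauge (mkAsg A.vars fun x => eval F ρ (σs x)) (A.args i)
            omega
          have h2 : (eval F (mkAsg A.vars fun x => eval F ρ (σs x)) A.rhs).gauge ≤
              max F.gauge ρ.gauge + (A.rhs.msubst σs).lh := by
            rw [← hrhs]
            exact eval_gauge F ρ (A.rhs.msubst σs)
          have h3 := Tm.lh_pos (A.lhs.msubst σs)
          have h4 := Tm.lh_pos (A.rhs.msubst σs)
          show max _ _ ≤ _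
          simp only [Deriv.lh]
          omega
        refine ⟨[⟨A.k, A.a,
            (fun i => (A.args i).evalA (mkAsg A.vars fun x => eval F ρ (σs x))),
            eval F (mkAsg A.vars fun x => eval F ρ (σs x)) A.rhs⟩],
          ⟨⟨hw, le_trans hupg hbud, A, rfl, _, rfl⟩, trivial⟩,
          update_consistent hAx hA hFc hM _ hw,
          update_model hAx hA hFc hM _ hw, ?_, ?_⟩
        · have := gauge_apUpd F ⟨A.k, A.a,
            (fun i => (A.args i).evalA (mkAsg A.vars fun x => eval F ρ (σs x))),
            eval F (mkAsg A.vars fun x => eval F ρ (σs x)) A.rhs⟩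
          show (F.apUpd _).gauge ≤ _
          omega
        · rw [show (F.apSeq [⟨A.k, A.a,
              (fun i => (A.args i).evalA (mkAsg A.vars fun x => eval F ρ (σs x))),
              eval F (mkAsg A.vars fun x => eval F ρ (σs x)) A.rhs⟩]) =
              F.apUpd ⟨A.k, A.a,
              (fun i => (A.args i).evalA (mkAsg A.vars fun x => eval F ρ (σs x))),
              eval F (mkAsg A.vars fun x => eval F ρ (σs x)) A.rhs⟩ from rfl,
            hrhs]
          have hlhs2 : eval (F.apUpd ⟨A.k, A.a,
              (fun i => (A.args i).evalA (mkAsg A.vars fun x => eval F ρ (σs x))),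
              eval F (mkAsg A.vars fun x => eval F ρ (σs x)) A.rhs⟩) ρ
                (A.lhs.msubst σs) =
              (F.apUpd ⟨A.k, A.a,
              (fun i => (A.args i).evalA (mkAsg A.vars fun x => eval F ρ (σs x))),
              eval F (mkAsg A.vars fun x => eval F ρ (σs x)) A.rhs⟩).app A.k A.a
                fun i => (A.args i).evalA (mkAsg A.vars fun x => eval F ρ (σs x)) := by
            rw [show A.lhs.msubst σs = Tm.app A.k A.a fun i => (A.args i).toTm.msubst σs from rfl]
            simp only [eval]
            congr 1
            funext i
            refine eval_gvar_msubst (A.args i) fun x hx => ?_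
            obtain ⟨y, hy⟩ := hren x (hlhs_vars i x hx)
            rw [hy, ← hρσ x (hlhs_vars i x hx), hy]
            rfl
          rw [hlhs2]
          exact app_approx_of_mem (update_consistent hAx hA hFc hM _ hw)
            ⟨_, tapprox_refl _, Finset.mem_insert_self _ _⟩
  | refl t =>
    intro F ρ _ hFc hM _
    have hgF : F.gauge ≤ max F.gauge ρ.gauge + (Deriv.refl (Ax := Ax) t).lh := by
      simp only [Deriv.lh]; omega
    exact ⟨⟨[], trivial, hFc, hM, hgF, approx_refl _⟩,
      ⟨[], trivial, hFc, hM, hgF, approx_refl _⟩⟩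
  | @symm t u d ih =>
    intro F ρ hvnf hFc hM hbud
    have hbud' : max F.gauge ρ.gauge + d.lh ≤ κ := by
      simp only [Deriv.lh] at hbud; omega
    obtain ⟨⟨σf, hsf, hcf, hmf, hgf, haf⟩, ⟨σb, hsb, hcb, hmb, hgb, hab⟩⟩ :=
      ih F ρ hvnf hFc hM hbud'
    have hsub : d.axiomsUsed ⊆ (Deriv.symm d).axiomsUsed := fun _ h => h
    have hlh : d.lh ≤ (Deriv.symm d).lh := by simp only [Deriv.lh]; omega
    exact ⟨⟨σb, isUpdSeq_mono hsub σb F hsb, hcb, hmb, by omega, hab⟩,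
      ⟨σf, isUpdSeq_mono hsub σf F hsf, hcf, hmf, by omega, haf⟩⟩
  | @trans t s u d₁ d₂ ih₁ ih₂ =>
    intro F ρ hvnf hFc hM hbud
    obtain ⟨hv1, hv2⟩ := hvnf
    have hbud1 : max F.gauge ρ.gauge + d₁.lh ≤ κ := by
      simp only [Deriv.lh] at hbud; omega
    have hbud2 : max F.gauge ρ.gauge + d₂.lh ≤ κ := by
      simp only [Deriv.lh] at hbud; omega
    have hsub1 : d₁.axiomsUsed ⊆ (Deriv.trans d₁ d₂).axiomsUsed :=
      Set.subset_union_left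
    have hsub2 : d₂.axiomsUsed ⊆ (Deriv.trans d₁ d₂).axiomsUsed :=
      Set.subset_union_right
    constructor
    · obtain ⟨⟨σ₁, hs₁, hc₁, hm₁, hg₁, ha₁⟩, -⟩ := ih₁ F ρ hv1 hFc hM hbud1
      obtain ⟨⟨σ₂, hs₂, hc₂, hm₂, hg₂, ha₂⟩, -⟩ := ih₂ (F.apSeq σ₁) ρ hv2 hc₁ hm₁
        (by simp only [Deriv.lh] at hbud; omega)
      refine ⟨σ₁ ++ σ₂, isUpdSeq_append σ₁ F σ₂ (isUpdSeq_mono hsub1 σ₁ F hs₁)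
        (isUpdSeq_mono hsub2 σ₂ _ hs₂), ?_, ?_, ?_, ?_⟩
      · rw [apSeq_append]; exact hc₂
      · rw [apSeq_append]; exact hm₂
      · rw [apSeq_append]; simp only [Deriv.lh]; omega
      · rw [apSeq_append]; exact approx_trans ha₁ ha₂
    · obtain ⟨-, ⟨σ₂, hs₂, hc₂, hm₂, hg₂, ha₂⟩⟩ := ih₂ F ρ hv2 hFc hM hbud2
      obtain ⟨-, ⟨σ₁, hs₁, hc₁, hm₁, hg₁, ha₁⟩⟩ := ih₁ (F.apSeq σ₂) ρ hv1 hc₂ hm₂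
        (by simp only [Deriv.lh] at hbud; omega)
      refine ⟨σ₂ ++ σ₁, isUpdSeq_append σ₂ F σ₁ (isUpdSeq_mono hsub2 σ₂ F hs₂)
        (isUpdSeq_mono hsub1 σ₁ _ hs₁), ?_, ?_, ?_, ?_⟩
      · rw [apSeq_append]; exact hc₁
      · rw [apSeq_append]; exact hm₁
      · rw [apSeq_append]; simp only [Deriv.lh]; omega
      · rw [apSeq_append]; exact approx_trans ha₂ ha₁
  | @compat t u s x d ih =>
    intro F ρ hvnf hFc hM hbud
    have hbud' : max F.gauge ρ.gauge + d.lh ≤ κ := by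
      simp only [Deriv.lh] at hbud; omega
    obtain ⟨⟨σf, hsf, hcf, hmf, hgf, haf⟩, ⟨σb, hsb, hcb, hmb, hgb, hab⟩⟩ :=
      ih F ρ hvnf hFc hM hbud'
    constructor
    · refine ⟨σf, isUpdSeq_mono (e := d) (e' := Deriv.compat s x d) (fun _ h => h) σf F hsf, hcf, hmf,
        by simp only [Deriv.lh]; omega, ?_⟩
      rw [show eval F ρ (s.subst x t) = eval F (ρ.update x (eval F ρ t)) s from
            eval_subst s,
          show eval (F.apSeq σf) ρ (s.subst x u) =
            eval (F.apSeq σf) (ρ.update x (eval (F.apSeq σf) ρ u)) s from eval_subst s]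
      exact eval_mono hcf (subset_apSeq F σf) s fun y _ => update_pointwise haf y
    · refine ⟨σb, isUpdSeq_mono (e := d) (e' := Deriv.compat s x d) (fun _ h => h) σb F hsb, hcb, hmb,
        by simp only [Deriv.lh]; omega, ?_⟩
      rw [show eval F ρ (s.subst x u) = eval F (ρ.update x (eval F ρ u)) s from
            eval_subst s,
          show eval (F.apSeq σb) ρ (s.subst x t) =
            eval (F.apSeq σb) (ρ.update x (eval (F.apSeq σb) ρ t)) s from eval_subst s]
      exact eval_mono hcb (subset_apSeq F σb) s fun y _ => update_pointwise hab y
  | @subst t u s x d ih =>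
    intro F ρ hvnf hFc hM hbud
    have hsg := eval_gauge F ρ s
    have hslh := Tm.lh_pos s
    have hg1 : Assignment.gauge (ρ.update x (eval F ρ s)) ≤
        max F.gauge ρ.gauge + s.lh := by
      have := gauge_update_le ρ x (eval F ρ s)
      omega
    have hbud' : max F.gauge (Assignment.gauge (ρ.update x (eval F ρ s))) + d.lh ≤ κ := by
      simp only [Deriv.lh] at hbud; omega
    obtain ⟨⟨σf, hsf, hcf, hmf, hgf, haf⟩, ⟨σb, hsb, hcb, hmb, hgb, hab⟩⟩ :=
      ih F (ρ.update x (eval F ρ s)) hvnf hFc hM hbud'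
    constructor
    · refine ⟨σf, isUpdSeq_mono (e := d) (e' := Deriv.subst s x d) (fun _ h => h) σf F hsf, hcf, hmf,
        by simp only [Deriv.lh] at hbud ⊢; omega, ?_⟩
      rw [show eval F ρ (t.subst x s) = eval F (ρ.update x (eval F ρ s)) t from
            eval_subst t,
          show eval (F.apSeq σf) ρ (u.subst x s) =
            eval (F.apSeq σf) (ρ.update x (eval (F.apSeq σf) ρ s)) u from eval_subst u]
      refine approx_trans haf (eval_mono hcf (Finset.Subset.refl _) u fun y _ => ?_)
      exact update_pointwise (eval_mono hcf (subset_apSeq F σf) s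
        fun z _ => approx_refl _) y
    · refine ⟨σb, isUpdSeq_mono (e := d) (e' := Deriv.subst s x d) (fun _ h => h) σb F hsb, hcb, hmb,
        by simp only [Deriv.lh] at hbud ⊢; omega, ?_⟩
      rw [show eval F ρ (u.subst x s) = eval F (ρ.update x (eval F ρ s)) u from
            eval_subst u,
          show eval (F.apSeq σb) ρ (t.subst x s) =
            eval (F.apSeq σb) (ρ.update x (eval (F.apSeq σb) ρ s)) t from eval_subst t]
      refine approx_trans hab (eval_mono hcb (Finset.Subset.refl _) t fun y _ => ?_)
      exact update_pointwise (eval_mono hcb (subset_apSeq F σb) s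
        fun z _ => approx_refl _) y

/-- Soundness of `PETS(Ax)` via approximation semantics,
provable in `S¹₂`... `S²₂`: if `𝒟 ⊢ t = u` is in Variable Normal Form, `ρ`
is an assignment, `F` a model of `Ax`, and `κ = max(G(F), G(ρ)) + lh(𝒟)`,
then there are sequences `σ₁`, `σ₂` of updates based on `F`, `κ` and `𝒟`
with `⟦t⟧_{F,ρ} ⊑ ⟦u⟧_{F*σ₁,ρ}` and `⟦u⟧_{F,ρ} ⊑ ⟦t⟧_{F*σ₂,ρ}`. -/
theorem soundness_approximation (Ax : Set Axm) (hAx : NiceAxioms Ax)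
    {t u : Tm} (d : Deriv Ax t u) (hVNF : d.VNF)
    (ρ : Assignment) (F : Frame) (hFc : F.Consistent) (hM : IsModel F Ax)
    (κ : ℕ) (hκ : κ = max F.gauge ρ.gauge + d.lh) :
    ∃ σ₁ σ₂ : List Upd, IsUpdSeq κ d F σ₁ ∧ IsUpdSeq κ d F σ₂ ∧
      Approx (eval F ρ t) (eval (F.apSeq σ₁) ρ u) ∧
      Approx (eval F ρ u) (eval (F.apSeq σ₂) ρ t) := by
  obtain ⟨⟨σ₁, hs₁, _, _, _, ha₁⟩, ⟨σ₂, hs₂, _, _, _, ha₂⟩⟩ :=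
    key_soundness hAx κ d F ρ hVNF.1 hFc hM (le_of_eq hκ.symm)
  exact ⟨σ₁, σ₂, hs₁, hs₂, ha₁, ha₂⟩

end PETS
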